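/- Trapezoid inequality for multiplicatively convex derivative: if f : [a,b] → ℝ⁺ is differentiable, a < b, and f* = e^{f'/f} is multiplicatively convex on [a,b] with f* ≥ 1, then √(f(a) f(b)) · exp((1/(a-b)) ∫_a^b ln f(u) du) ≤ (f*(a) f*(b))^{(b-a)/8}. -/

import Mathlib

open Real intervalIntegral

/-- Trapezoid inequality for functions with multiplicatively convex multiplicative derivative. -/
theorem mul_trapezoid_inequality (f : ℝ → ℝ) (a b : ℝ) (hab : a < b)
    (hpos : ∀ x ∈ Set.Icc a b, 0 < f x)
    (hdiff : ∀ x ∈ Set.Icc a b, DifferentiableAt ℝ f x)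
    (hint : IntervalIntegrable (fun x => deriv f x / f x) MeasureTheory.volume a b)
    (hconv : ∀ x ∈ Set.Icc a b, ∀ y ∈ Set.Icc a b, ∀ t ∈ Set.Icc (0:ℝ) 1,
      Real.exp (deriv f (t * x + (1 - t) * y) / f (t * x + (1 - t) * y)) ≤
        Real.exp (deriv f x / f x) ^ t * Real.exp (deriv f y / f y) ^ (1 - t))
    (hone : ∀ x ∈ Set.Icc a b, 1 ≤ Real.exp (deriv f x / f x)) :
    Real.sqrt (f a * f b) * Real.exp ((1 / (a - b)) * ∫ u in a..b, Real.log (f u)) ≤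
      (Real.exp (deriv f a / f a) * Real.exp (deriv f b / f b)) ^ ((b - a) / 8) := by
  set D : ℝ → ℝ := fun x => deriv f x / f x with hD
  set g : ℝ → ℝ := fun x => Real.log (f x) with hg
  have hmema : a ∈ Set.Icc a b := Set.left_mem_Icc.mpr hab.le
  have hmemb : b ∈ Set.Icc a b := Set.right_mem_Icc.mpr hab.le
  -- D nonneg
  have hDnn : ∀ x ∈ Set.Icc a b, 0 ≤ D x := by
    intro x hx
    have := hone x hx
    rwa [show (1:ℝ) = Real.exp 0 by simp, Real.exp_le_exp] at this
  -- D bounded by D a + D b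
  have hDle : ∀ x ∈ Set.Icc a b, D x ≤ D a + D b := by
    intro x hx
    set t : ℝ := (b - x) / (b - a) with ht
    have hba : (0:ℝ) < b - a := by linarith
    have ht0 : 0 ≤ t := div_nonneg (by linarith [hx.2]) hba.le
    have ht1 : t ≤ 1 := by
      rw [div_le_one hba]; linarith [hx.1]
    have hpt : t * a + (1 - t) * b = x := by
      have h' : t * (b - a) = b - x := by rw [ht]; exact div_mul_cancel₀ _ hba.ne'
      linarith
    have h := hconv a hmema b hmemb t ⟨ht0, ht1⟩
    rw [hpt] at h
    rw [← Real.exp_mul, ← Real.exp_mul, ← Real.exp_add, Real.exp_le_exp] at h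
    have hDa := hDnn a hmema
    have hDb := hDnn b hmemb
    nlinarith
  -- derivative of g
  have hgderiv : ∀ x ∈ Set.uIcc a b, HasDerivAt g (D x) x := by
    intro x hx
    rw [Set.uIcc_of_le hab.le] at hx
    exact ((hdiff x hx).hasDerivAt).log (hpos x hx).ne'
  -- integration by parts
  have hu : ∀ x ∈ Set.uIcc a b, HasDerivAt (fun x : ℝ => 2 * x - a - b) 2 x := by
    intro x _
    simpa using (((hasDerivAt_id x).const_mul 2).sub_const a).sub_const b
  have hu' : IntervalIntegrable (fun _ : ℝ => (2:ℝ)) MeasureTheory.volume a b :=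
    intervalIntegrable_const
  have hibp := intervalIntegral.integral_mul_deriv_eq_deriv_mul hu hgderiv hu' hint
  -- hibp : ∫ x in a..b, (2*x-a-b) * D x = (2*b-a-b)*g b - (2*a-a-b)*g a - ∫ x in a..b, 2 * g x
  have hint2 : (∫ x in a..b, (2:ℝ) * g x) = 2 * ∫ x in a..b, g x :=
    intervalIntegral.integral_const_mul 2 g
  -- bound the integral ∫ (2x-a-b) D x
  set m : ℝ := (a + b) / 2 with hm
  have ham : a ≤ m := by rw [hm]; linarith
  have hmb : m ≤ b := by rw [hm]; linarith
  have hK : IntervalIntegrable (fun x => (2 * x - a - b) * D x) MeasureTheory.volume a b := by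
    apply hint.continuousOn_mul
    exact (Continuous.continuousOn (((continuous_const.mul continuous_id).sub continuous_const).sub continuous_const))
  have hK1 : IntervalIntegrable (fun x => (2 * x - a - b) * D x) MeasureTheory.volume a m :=
    hK.mono_set (Set.uIcc_subset_uIcc_iff_le.mpr (by
      constructor <;> simp [Set.uIcc_of_le, hab.le, ham, hmb, le_refl] <;> constructor <;> linarith))
  have hK2 : IntervalIntegrable (fun x => (2 * x - a - b) * D x) MeasureTheory.volume m b :=
    hK.mono_set (Set.uIcc_subset_uIcc_iff_le.mpr (by
      constructor <;> simp [Set.uIcc_of_le, hab.le, ham, hmb, le_refl] <;> constructor <;> linarith))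
  have hsplit : (∫ x in a..m, (2 * x - a - b) * D x) + (∫ x in m..b, (2 * x - a - b) * D x)
      = ∫ x in a..b, (2 * x - a - b) * D x :=
    intervalIntegral.integral_add_adjacent_intervals hK1 hK2
  have hpart1 : (∫ x in a..m, (2 * x - a - b) * D x) ≤ 0 := by
    have h0 : (∫ x in a..m, (0:ℝ)) = 0 := by simp
    calc (∫ x in a..m, (2 * x - a - b) * D x) ≤ ∫ x in a..m, (0:ℝ) := by
          apply intervalIntegral.integral_mono_on ham hK1 intervalIntegrable_const
          intro x hx
          have hx' : x ∈ Set.Icc a b := ⟨hx.1, hx.2.trans hmb⟩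
          have h1 : 2 * x - a - b ≤ 0 := by
            have := hx.2; rw [hm] at this; linarith
          exact mul_nonpos_of_nonpos_of_nonneg h1 (hDnn x hx')
      _ = 0 := h0
  have hC : (0:ℝ) ≤ D a + D b := by
    have := hDnn a hmema; have := hDnn b hmemb; linarith
  have hpart2 : (∫ x in m..b, (2 * x - a - b) * D x)
      ≤ (D a + D b) * (b - a) ^ 2 / 4 := by
    have hconst : IntervalIntegrable (fun x => (2 * x - a - b) * (D a + D b))
        MeasureTheory.volume m b := by
      apply IntervalIntegrable.mul_const
      exact Continuous.intervalIntegrable (((continuous_const.mul continuous_id).sub continuous_const).sub continuous_const) m b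
    have hmono : (∫ x in m..b, (2 * x - a - b) * D x)
        ≤ ∫ x in m..b, (2 * x - a - b) * (D a + D b) := by
      apply intervalIntegral.integral_mono_on hmb hK2 hconst
      intro x hx
      have hx' : x ∈ Set.Icc a b := ⟨ham.trans hx.1, hx.2⟩
      have h1 : 0 ≤ 2 * x - a - b := by
        have := hx.1; rw [hm] at this; linarith
      exact mul_le_mul_of_nonneg_left (hDle x hx') h1
    have hcomp : (∫ x in m..b, (2 * x - a - b) * (D a + D b))
        = (D a + D b) * (b - a) ^ 2 / 4 := by
      rw [intervalIntegral.integral_mul_const]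
      have : (∫ x in m..b, (2 * x - a - b)) = (b - a) ^ 2 / 4 := by
        have hder : ∀ x ∈ Set.uIcc m b, HasDerivAt (fun x : ℝ => x ^ 2 - (a + b) * x)
            (2 * x - a - b) x := by
          intro x _
          have h1 := (hasDerivAt_pow 2 x).sub ((hasDerivAt_id x).const_mul (a + b))
          exact h1.congr_deriv (by ring)
        rw [intervalIntegral.integral_eq_sub_of_hasDerivAt hder (by
          exact Continuous.intervalIntegrable
            (((continuous_const.mul continuous_id).sub continuous_const).sub continuous_const) m b)]
        rw [hm]; ring
      rw [this]; ring
    linarith [hmono, hcomp.le]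
  -- main scalar inequality
  have hkey : (∫ x in a..b, (2 * x - a - b) * D x) ≤ (D a + D b) * (b - a) ^ 2 / 4 := by
    rw [← hsplit]; linarith
  have hibp' : (b - a) * (g a + g b) - 2 * ∫ x in a..b, g x
      ≤ (D a + D b) * (b - a) ^ 2 / 4 := by
    rw [hint2] at hibp
    calc (b - a) * (g a + g b) - 2 * ∫ x in a..b, g x
        = (2 * b - a - b) * g b - (2 * a - a - b) * g a - 2 * ∫ x in a..b, g x := by ring
      _ = ∫ x in a..b, (2 * x - a - b) * D x := by rw [hibp]
      _ ≤ (D a + D b) * (b - a) ^ 2 / 4 := hkey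
  have hexp : (g a + g b) / 2 + (1 / (a - b)) * (∫ x in a..b, g x)
      ≤ (D a + D b) * ((b - a) / 8) := by
    have hba : (0:ℝ) < b - a := by linarith
    have e : (g a + g b) / 2 + (1 / (a - b)) * (∫ x in a..b, g x)
        = ((b - a) * (g a + g b) - 2 * ∫ x in a..b, g x) / (2 * (b - a)) := by
      have hne : a - b ≠ 0 := by linarith
      field_simp
      ring
    rw [e, div_le_iff₀ (by positivity)]
    nlinarith [hibp']
  -- now rewrite both sides as exponentials
  have hfa := hpos a hmema
  have hfb := hpos b hmemb
  have hLHS : Real.sqrt (f a * f b) * Real.exp ((1 / (a - b)) * ∫ u in a..b, Real.log (f u))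
      = Real.exp ((g a + g b) / 2 + (1 / (a - b)) * ∫ x in a..b, g x) := by
    rw [Real.exp_add]
    congr 1
    rw [← Real.exp_log (Real.sqrt_pos.mpr (by positivity : 0 < f a * f b))]
    congr 1
    rw [Real.log_sqrt (by positivity), Real.log_mul hfa.ne' hfb.ne']
  have hRHS : (Real.exp (deriv f a / f a) * Real.exp (deriv f b / f b)) ^ ((b - a) / 8)
      = Real.exp ((D a + D b) * ((b - a) / 8)) := by
    rw [← Real.exp_add, Real.exp_mul]
  rw [hLHS, hRHS]
  exact Real.exp_le_exp.mpr hexp
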